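/- Let M, N be natural numbers, let a, b, c, z be real numbers, and let r, s be integers with 1 ≤ r ≤ 2M, 1 ≤ s ≤ 2N, sin(2πcr) ≠ 0, and sin(2πzs) ≠ 0. Then ∑_{m=-M}^{M-r} ∑_{n=-N+s}^{N} cos(2π·(-a·r + b·s + c·(r² + 2mr) + z·(s² − 2ns))) = Φ(c,r,M)·Φ(z,s,N)·cos(2π(ar − bs)). -/

import Mathlib

open Real Finset

/-- `Φ(x, y, K) = sin(2πxy(2K − y + 1)) / sin(2πxy)`. -/
noncomputable def Phi (x : ℝ) (y : ℤ) (K : ℕ) : ℝ :=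
  Real.sin (2 * π * x * y * (2 * K - y + 1)) / Real.sin (2 * π * x * y)

lemma sum_cos_range (n : ℕ) (B x : ℝ) :
    2 * Real.sin (x / 2) * ∑ i ∈ range n, Real.cos (B + i * x) =
      2 * Real.sin (n * x / 2) * Real.cos (B + (n - 1) * x / 2) := by
  have key : ∀ i : ℕ, 2 * Real.sin (x / 2) * Real.cos (B + i * x) =
      Real.sin (B + (i + 1) * x - x / 2) - Real.sin (B + i * x - x / 2) := by
    intro i
    rw [Real.sin_sub_sin]
    ring_nf
  calc 2 * Real.sin (x / 2) * ∑ i ∈ range n, Real.cos (B + i * x)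
      = ∑ i ∈ range n, (Real.sin (B + (i + 1) * x - x / 2) - Real.sin (B + i * x - x / 2)) := by
        rw [Finset.mul_sum]; exact Finset.sum_congr rfl fun i _ => key i
    _ = Real.sin (B + n * x - x / 2) - Real.sin (B + 0 * x - x / 2) := by
        have := Finset.sum_range_sub (fun i : ℕ => Real.sin (B + i * x - x / 2)) n
        simpa using this
    _ = 2 * Real.sin (n * x / 2) * Real.cos (B + (n - 1) * x / 2) := by
        rw [Real.sin_sub_sin]; ring_nf

lemma sum_Icc_int (f : ℤ → ℝ) (p q : ℤ) :
    ∑ k ∈ Icc p q, f k = ∑ i ∈ range (q + 1 - p).toNat, f (p + i) := by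
  refine Finset.sum_nbij' (fun k => (k - p).toNat) (fun i => p + i) ?_ ?_ ?_ ?_ ?_
  · intro k hk; simp only [Finset.mem_Icc] at hk; simp only [Finset.mem_range]; omega
  · intro i hi; simp only [Finset.mem_range] at hi; simp only [Finset.mem_Icc]; omega
  · intro k hk; simp only [Finset.mem_Icc] at hk; omega
  · intro i hi; simp only [Finset.mem_range] at hi; omega
  · intro k hk; simp only [Finset.mem_Icc] at hk
    congr 1; omega

lemma sum_cos_Icc (p q : ℤ) (hpq : p ≤ q) (B x : ℝ) (hx : Real.sin (x / 2) ≠ 0) :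
    ∑ k ∈ Icc p q, Real.cos (B + k * x) =
      Real.sin (((q : ℝ) - p + 1) * x / 2) / Real.sin (x / 2) *
        Real.cos (B + ((p : ℝ) + q) * x / 2) := by
  rw [sum_Icc_int (fun k => Real.cos (B + k * x)) p q]
  have hn : (((q + 1 - p).toNat : ℝ)) = (q : ℝ) - p + 1 := by
    have h1 : ((q + 1 - p).toNat : ℤ) = q + 1 - p := by omega
    have h2 : (((q + 1 - p).toNat : ℕ) : ℝ) = (((q + 1 - p).toNat : ℤ) : ℝ) := by norm_cast
    rw [h2, h1]; push_cast; ring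
  have h := sum_cos_range (q + 1 - p).toNat (B + p * x) x
  have hsum : ∑ i ∈ range (q + 1 - p).toNat, Real.cos (B + ((p + (i : ℤ) : ℤ) : ℝ) * x) =
      ∑ i ∈ range (q + 1 - p).toNat, Real.cos ((B + p * x) + i * x) := by
    refine Finset.sum_congr rfl fun i _ => ?_
    congr 1; push_cast; ring
  rw [hsum, div_mul_eq_mul_div, eq_div_iff hx]
  rw [hn] at h
  have hcos : Real.cos (B + (p : ℝ) * x + (((q : ℝ) - p + 1) - 1) * x / 2) =
      Real.cos (B + ((p : ℝ) + q) * x / 2) := by congr 1; ring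
  rw [hcos] at h
  linarith [h]

theorem inner_sum_I5 (M N : ℕ) (a b c z : ℝ) (r s : ℤ)
    (hr1 : 1 ≤ r) (hr2 : r ≤ 2 * M) (hs1 : 1 ≤ s) (hs2 : s ≤ 2 * N)
    (hc : Real.sin (2 * π * c * r) ≠ 0) (hz : Real.sin (2 * π * z * s) ≠ 0) :
    ∑ m ∈ Finset.Icc (-(M : ℤ)) (M - r), ∑ n ∈ Finset.Icc (-(N : ℤ) + s) (N : ℤ),
        Real.cos (2 * π * (-a * r + b * s + c * ((r : ℝ) ^ 2 + 2 * m * r)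
          + z * ((s : ℝ) ^ 2 - 2 * n * s))) =
      Phi c r M * Phi z s N * Real.cos (2 * π * (a * r - b * s)) := by
  set X : ℝ := 4 * π * c * r with hXdef
  set Y : ℝ := -(4 * π * z * s) with hYdef
  set A : ℝ := 2 * π * (-a * r + b * s + c * (r : ℝ) ^ 2 + z * (s : ℝ) ^ 2) with hAdef
  have hX2 : Real.sin (X / 2) ≠ 0 := by
    have : X / 2 = 2 * π * c * r := by rw [hXdef]; ring
    rw [this]; exact hc
  have hY2 : Real.sin (Y / 2) ≠ 0 := by
    have : Y / 2 = -(2 * π * z * s) := by rw [hYdef]; ring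
    rw [this, Real.sin_neg]; simpa using hz
  -- inner sum
  have inner : ∀ m : ℤ, (∑ n ∈ Finset.Icc (-(N : ℤ) + s) (N : ℤ),
      Real.cos (2 * π * (-a * r + b * s + c * ((r : ℝ) ^ 2 + 2 * m * r)
        + z * ((s : ℝ) ^ 2 - 2 * n * s)))) =
      Phi z s N * Real.cos ((A + (s : ℝ) * Y / 2) + m * X) := by
    intro m
    have hpq : (-(N : ℤ) + s) ≤ (N : ℤ) := by omega
    have step : ∀ n : ℤ, Real.cos (2 * π * (-a * r + b * s + c * ((r : ℝ) ^ 2 + 2 * m * r)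
        + z * ((s : ℝ) ^ 2 - 2 * n * s))) = Real.cos ((A + m * X) + n * Y) := by
      intro n; congr 1; rw [hAdef, hXdef, hYdef]; push_cast; ring
    rw [Finset.sum_congr rfl fun n _ => step n,
      sum_cos_Icc (-(N : ℤ) + s) (N : ℤ) hpq (A + m * X) Y hY2]
    have e1 : Real.sin ((((N : ℤ) : ℝ) - ((-(N : ℤ) + s : ℤ) : ℝ) + 1) * Y / 2) /
        Real.sin (Y / 2) = Phi z s N := by
      rw [Phi]
      have hy2 : Y / 2 = -(2 * π * z * s) := by rw [hYdef]; ring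
      have hnum : (((N : ℤ) : ℝ) - ((-(N : ℤ) + s : ℤ) : ℝ) + 1) * Y / 2 =
          -(2 * π * z * s * (2 * N - s + 1)) := by rw [hYdef]; push_cast; ring
      rw [hnum, hy2, Real.sin_neg, Real.sin_neg, neg_div_neg_eq]
    have e2 : (A + m * X) + ((((-(N : ℤ) + s : ℤ) : ℝ)) + ((N : ℤ) : ℝ)) * Y / 2 =
        (A + (s : ℝ) * Y / 2) + m * X := by push_cast; ring
    rw [e2] at *
    rw [e1]
  rw [Finset.sum_congr rfl fun m _ => inner m, ← Finset.mul_sum,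
    sum_cos_Icc (-(M : ℤ)) ((M : ℤ) - r) (by omega) (A + (s : ℝ) * Y / 2) X hX2]
  have e3 : Real.sin (((((M : ℤ) - r : ℤ) : ℝ) - ((-(M : ℤ) : ℤ) : ℝ) + 1) * X / 2) /
      Real.sin (X / 2) = Phi c r M := by
    rw [Phi]
    have hx2 : X / 2 = 2 * π * c * r := by rw [hXdef]; ring
    have hnum : ((((M : ℤ) - r : ℤ) : ℝ) - ((-(M : ℤ) : ℤ) : ℝ) + 1) * X / 2 =
        2 * π * c * r * (2 * M - r + 1) := by rw [hXdef]; push_cast; ring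
    rw [hnum, hx2]
  have e4 : (A + (s : ℝ) * Y / 2) + (((-(M : ℤ) : ℤ) : ℝ) + (((M : ℤ) - r : ℤ) : ℝ)) * X / 2 =
      -(2 * π * (a * r - b * s)) := by rw [hAdef, hXdef, hYdef]; push_cast; ring
  rw [e4, e3, Real.cos_neg]
  ring
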